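/- For integers n ≥ 1 and h ≥ 1, the number of Dyck paths of length 2n that reach height at least h equals the sum over k ≥ 1 of (binomial(2n, n - k(h+1) - 1) - 2·binomial(2n, n - k(h+1)) + binomial(2n, n - k(h+1) + 1)). -/

import Mathlib

open Finset

/-- The height of the lattice path with step sequence `s` (true = up-step (1,1),
false = down-step (1,-1)) after `i` steps. -/
def pathHt {m : ℕ} (s : Fin m → Bool) (i : ℕ) : ℤ :=
  ∑ j ∈ Finset.univ.filter (fun j : Fin m => (j : ℕ) < i), (if s j then (1 : ℤ) else -1)

/-- Binomial coefficient `n` choose `j` for an integer lower index `j`,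
equal to `0` when `j < 0` or `j > n`. -/
def intChoose (n : ℕ) (j : ℤ) : ℤ :=
  if 0 ≤ j then (n.choose j.toNat : ℤ) else 0

lemma intChoose_pascal (m : ℕ) (j : ℤ) :
    intChoose (m + 1) j = intChoose m j + intChoose m (j - 1) := by
  unfold intChoose
  rcases lt_trichotomy j 0 with hj | hj | hj
  · rw [if_neg (by omega), if_neg (by omega), if_neg (by omega)]; ring
  · subst hj; norm_num
  · rw [if_pos (by omega), if_pos (by omega), if_pos (by omega)]
    obtain ⟨t, rfl⟩ : ∃ t : ℕ, j = (t : ℤ) + 1 := ⟨(j - 1).toNat, by omega⟩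
    have h1 : ((t : ℤ) + 1).toNat = t + 1 := by omega
    have h2 : ((t : ℤ) + 1 - 1).toNat = t := by omega
    rw [h1, h2, Nat.choose_succ_succ']
    push_cast; ring

lemma intChoose_symm (m : ℕ) (j : ℤ) : intChoose m j = intChoose m (m - j) := by
  unfold intChoose
  rcases lt_trichotomy j 0 with hj | hj | hj
  · rw [if_neg (by omega), if_pos (by omega)]
    rw [Nat.choose_eq_zero_of_lt (by omega)]; norm_num
  · subst hj; simp
  · by_cases hm : j ≤ m
    · rw [if_pos (by omega), if_pos (by omega)]
      obtain ⟨t, rfl⟩ : ∃ t : ℕ, j = (t : ℤ) := ⟨j.toNat, by omega⟩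
      have ht : t ≤ m := by exact_mod_cast hm
      have h2 : ((m : ℤ) - t).toNat = m - t := by omega
      rw [h2, Int.toNat_natCast, Nat.choose_symm ht]
    · rw [if_pos (by omega)]
      rw [Nat.choose_eq_zero_of_lt (by omega)]
      by_cases h : (0:ℤ) ≤ (m:ℤ) - j
      · rw [if_pos h, Nat.choose_eq_zero_of_lt (by omega)]
      · rw [if_neg h]; norm_num

lemma intChoose_eq_zero (m : ℕ) (j : ℤ) (h : j < 0 ∨ (m : ℤ) < j) : intChoose m j = 0 := by
  unfold intChoose
  rcases h with h | h
  · rw [if_neg (by omega)]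
  · rw [if_pos (by omega), Nat.choose_eq_zero_of_lt (by omega)]; norm_num

/-- unconstrained path count: number of ±1 paths of length `m` ending at `b`. -/
def uc (m : ℕ) (b : ℤ) : ℤ := if 2 ∣ (m + b) then intChoose m ((m + b) / 2) else 0

lemma uc_pascal (m : ℕ) (b : ℤ) : uc (m + 1) b = uc m (b - 1) + uc m (b + 1) := by
  unfold uc
  push_cast
  by_cases hp : 2 ∣ ((m : ℤ) + 1 + b)
  · rw [if_pos hp, if_pos (by omega), if_pos (by omega)]
    have e1 : ((m : ℤ) + (b + 1)) / 2 = ((m : ℤ) + 1 + b) / 2 := by omega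
    have e2 : ((m : ℤ) + (b - 1)) / 2 = ((m : ℤ) + 1 + b) / 2 - 1 := by omega
    rw [e1, e2]
    push_cast [intChoose_pascal m (((m : ℤ) + 1 + b) / 2)]; ring
  · rw [if_neg hp, if_neg (by omega), if_neg (by omega)]; ring

lemma uc_eq_zero (m : ℕ) (b : ℤ) (h : (m : ℤ) < b ∨ b < -(m : ℤ)) : uc m b = 0 := by
  unfold uc
  by_cases hp : 2 ∣ ((m : ℤ) + b)
  · rw [if_pos hp, intChoose_eq_zero]; omega
  · rw [if_neg hp]

lemma uc_zero (b : ℤ) : uc 0 b = if b = 0 then 1 else 0 := by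
  unfold uc intChoose
  push_cast
  rcases eq_or_ne b 0 with rfl | hb
  · norm_num
  · rw [if_neg hb]
    split_ifs with h1 h2
    · rw [Nat.choose_eq_zero_of_lt (by omega)]; norm_num
    · rfl
    · rfl

/-- Reflected sum of binomials, counting paths in a strip by inclusion-exclusion. -/
noncomputable def refSum (p K : ℤ) (m : ℕ) (a : ℤ) : ℤ :=
  ∑ k ∈ Finset.Icc (-K) K, (uc m (a + 2 * k * p) - uc m (-2 - a + 2 * k * p))

lemma refSum_pascal (p K : ℤ) (m : ℕ) (a : ℤ) :
    refSum p K (m + 1) a = refSum p K m (a - 1) + refSum p K m (a + 1) := by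
  unfold refSum
  rw [← Finset.sum_add_distrib]
  refine Finset.sum_congr rfl fun k _ => ?_
  rw [uc_pascal m (a + 2 * k * p), uc_pascal m (-2 - a + 2 * k * p),
    show a - 1 + 2 * k * p = a + 2 * k * p - 1 from by ring,
    show a + 1 + 2 * k * p = a + 2 * k * p + 1 from by ring,
    show -2 - (a - 1) + 2 * k * p = -2 - a + 2 * k * p + 1 from by ring,
    show -2 - (a + 1) + 2 * k * p = -2 - a + 2 * k * p - 1 from by ring]
  ring

lemma refSum_neg_one (p K : ℤ) (m : ℕ) : refSum p K m (-1) = 0 := by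
  unfold refSum
  refine Finset.sum_eq_zero fun k _ => ?_
  rw [show (-2 : ℤ) - (-1) + 2 * k * p = -1 + 2 * k * p from by ring, sub_self]

lemma refSum_top (p K : ℤ) (m : ℕ) (hp : 2 ≤ p) (hK : (m : ℤ) ≤ K) :
    refSum p K m (p - 1) = 0 := by
  have hK0 : 0 ≤ K := le_trans (by positivity) hK
  have hm0 : (0 : ℤ) ≤ m := by positivity
  unfold refSum
  have key : ∀ k : ℤ, -2 - (p - 1) + 2 * k * p = p - 1 + 2 * (k - 1) * p := fun k => by ring
  set g : ℤ → ℤ := fun k => uc m (p - 1 + 2 * k * p) with hg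
  have step : ∀ k ∈ Finset.Icc (-K) K,
      uc m (p - 1 + 2 * k * p) - uc m (-2 - (p - 1) + 2 * k * p) = g k - g (k - 1) := by
    intro k _; rw [key k]
  rw [Finset.sum_congr rfl step, Finset.sum_sub_distrib]
  have hshift : ∑ k ∈ Finset.Icc (-K) K, g (k - 1) = ∑ k ∈ Finset.Icc (-K - 1) (K - 1), g k := by
    rw [show Finset.Icc (-K) K = (Finset.Icc (-K - 1) (K - 1)).map (addRightEmbedding 1) from by
      rw [Finset.map_add_right_Icc]; ring_nf, Finset.sum_map]
    refine Finset.sum_congr rfl fun k _ => ?_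
    simp [addRightEmbedding]
  rw [hshift]
  have h1 : Finset.Icc (-K - 1) K = insert (-K - 1) (Finset.Icc (-K) K) := by
    ext x; simp only [Finset.mem_Icc, Finset.mem_insert]; omega
  have h2 : Finset.Icc (-K - 1) K = insert K (Finset.Icc (-K - 1) (K - 1)) := by
    ext x; simp only [Finset.mem_Icc, Finset.mem_insert]; omega
  have n1 : (-K - 1) ∉ Finset.Icc (-K) K := by simp only [Finset.mem_Icc]; omega
  have n2 : K ∉ Finset.Icc (-K - 1) (K - 1) := by simp only [Finset.mem_Icc]; omega
  have e1 : ∑ k ∈ Finset.Icc (-K - 1) K, g k = g (-K - 1) + ∑ k ∈ Finset.Icc (-K) K, g k := by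
    rw [h1, Finset.sum_insert n1]
  have e2 : ∑ k ∈ Finset.Icc (-K - 1) K, g k = g K + ∑ k ∈ Finset.Icc (-K - 1) (K - 1), g k := by
    rw [h2, Finset.sum_insert n2]
  have gK : g K = 0 := by
    apply uc_eq_zero; left; nlinarith
  have gK' : g (-K - 1) = 0 := by
    apply uc_eq_zero; right; nlinarith
  omega

lemma refSum_base (p K : ℤ) (hp : 2 ≤ p) (hK : 0 ≤ K) (a : ℤ) (ha1 : -1 ≤ a) (ha2 : a ≤ p - 1) :
    refSum p K 0 a = if a = 0 then 1 else 0 := by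
  unfold refSum
  rw [Finset.sum_eq_single_of_mem 0 (by simp only [Finset.mem_Icc]; omega)]
  · rw [uc_zero, uc_zero]
    simp only [mul_zero, zero_mul, add_zero]
    rw [if_neg (show ¬(-2 - a = 0) from by omega)]
    ring
  · intro k _ hk
    rw [uc_zero, uc_zero, if_neg, if_neg]
    · ring
    · rcases lt_or_gt_of_ne hk with h | h
      · nlinarith
      · nlinarith
    · rcases lt_or_gt_of_ne hk with h | h
      · nlinarith
      · nlinarith

/-- Number of ±1 paths of length `m` ending at `a` all of whose partial heights
(including the endpoints) lie in `[0, H]`. -/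
def stripCount (H : ℤ) : ℕ → ℤ → ℤ
  | 0, a => if a = 0 then 1 else 0
  | (m + 1), a =>
      if 0 ≤ a ∧ a ≤ H then stripCount H m (a - 1) + stripCount H m (a + 1) else 0

lemma stripCount_eq_refSum (H : ℤ) (hH : 0 ≤ H) (K : ℤ) :
    ∀ m : ℕ, (m : ℤ) ≤ K → ∀ a : ℤ, -1 ≤ a → a ≤ H + 1 →
      stripCount H m a = refSum (H + 2) K m a := by
  intro m
  induction m with
  | zero =>
    intro hK a ha1 ha2
    rw [refSum_base (H + 2) K (by omega) (by omega) a ha1 (by omega)]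
    rfl
  | succ m ih =>
    intro hK a ha1 ha2
    have hKm : (m : ℤ) ≤ K := by push_cast at hK ⊢; omega
    rcases eq_or_lt_of_le ha1 with h1 | h1
    · rw [show a = -1 from h1.symm, refSum_neg_one]
      show (if (0:ℤ) ≤ -1 ∧ (-1:ℤ) ≤ H then _ else 0) = 0
      rw [if_neg (by omega)]
    rcases eq_or_lt_of_le ha2 with h2 | h2
    · subst h2
      rw [show H + 1 = (H + 2) - 1 from by ring, refSum_top (H + 2) K (m + 1) (by omega) hK]
      show (if (0:ℤ) ≤ H + 2 - 1 ∧ H + 2 - 1 ≤ H then _ else 0) = 0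
      rw [if_neg (by omega)]
    · rw [refSum_pascal]
      show (if (0:ℤ) ≤ a ∧ a ≤ H then stripCount H m (a - 1) + stripCount H m (a + 1) else 0) = _
      rw [if_pos (by omega), ih hKm (a - 1) (by omega) (by omega),
        ih hKm (a + 1) (by omega) (by omega)]

lemma pathHt_stable {m : ℕ} (s : Fin m → Bool) {i : ℕ} (h : m ≤ i) :
    pathHt s i = pathHt s m := by
  unfold pathHt
  refine Finset.sum_congr (Finset.filter_congr fun j _ => ?_) fun _ _ => rfl
  have := j.isLt
  omega

lemma pathHt_le {m : ℕ} (s : Fin m → Bool) (i : ℕ) : pathHt s i ≤ m := by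
  unfold pathHt
  calc ∑ j ∈ Finset.univ.filter (fun j : Fin m => (j : ℕ) < i),
        (if s j then (1 : ℤ) else -1)
      ≤ ∑ _j ∈ Finset.univ.filter (fun j : Fin m => (j : ℕ) < i), (1 : ℤ) :=
        Finset.sum_le_sum (fun j _ => by by_cases hs : s j <;> simp [hs])
    _ = (Finset.univ.filter (fun j : Fin m => (j : ℕ) < i)).card := by
        rw [Finset.sum_const]; simp
    _ ≤ m := by
        have := Finset.card_filter_le (Finset.univ : Finset (Fin m))
          (fun j : Fin m => (j : ℕ) < i)
        simp only [Finset.card_univ, Fintype.card_fin] at this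
        exact_mod_cast this

lemma pathHt_snoc {m : ℕ} (t : Fin m → Bool) (b : Bool) (i : ℕ) :
    pathHt (Fin.snoc t b) i
      = pathHt t i + (if m < i then (if b then (1 : ℤ) else -1) else 0) := by
  unfold pathHt
  rw [Finset.sum_filter, Finset.sum_filter, Fin.sum_univ_castSucc]
  simp only [Fin.coe_castSucc, Fin.snoc_castSucc, Fin.val_last, Fin.snoc_last]

lemma card_strip (H : ℤ) (hH : 0 ≤ H) :
    ∀ (m : ℕ) (a : ℤ),
      ((Finset.univ.filter (fun s : Fin m → Bool =>
        pathHt s m = a ∧ ∀ i ≤ m, 0 ≤ pathHt s i ∧ pathHt s i ≤ H)).card : ℤ)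
      = stripCount H m a := by
  intro m
  induction m with
  | zero =>
    intro a
    have hp : ∀ (s : Fin 0 → Bool) (i : ℕ), pathHt s i = 0 := by
      intro s i; unfold pathHt; simp
    show _ = if a = 0 then 1 else 0
    rcases eq_or_ne a 0 with rfl | h
    · rw [if_pos rfl, Finset.filter_true_of_mem]
      · simp
      · intro s _
        exact ⟨hp s 0, fun i _ => ⟨le_of_eq (hp s i).symm, (hp s i) ▸ hH⟩⟩
    · rw [if_neg h, Finset.filter_false_of_mem]
      · simp
      · intro s _ hc
        exact h ((hc.1).symm.trans (hp s 0))
  | succ m ih =>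
    intro a
    set P : (Fin (m + 1) → Bool) → Prop := fun s =>
      pathHt s (m + 1) = a ∧ ∀ i ≤ m + 1, 0 ≤ pathHt s i ∧ pathHt s i ≤ H with hP
    have key : ∀ (b : Bool) (t : Fin m → Bool),
        P (Fin.snoc t b) ↔ ((0 ≤ a ∧ a ≤ H) ∧
          (pathHt t m = a - (if b then (1 : ℤ) else -1) ∧
            ∀ i ≤ m, 0 ≤ pathHt t i ∧ pathHt t i ≤ H)) := by
      intro b t
      have hsn : ∀ i ≤ m, pathHt (Fin.snoc t b) i = pathHt t i := by
        intro i hi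
        rw [pathHt_snoc, if_neg (by omega), add_zero]
      have hend : pathHt (Fin.snoc t b) (m + 1)
          = pathHt t m + (if b then (1 : ℤ) else -1) := by
        rw [pathHt_snoc, if_pos (by omega), pathHt_stable t (by omega : m ≤ m + 1)]
      constructor
      · rintro ⟨h1, h2⟩
        obtain ⟨hl, hr⟩ := h2 (m + 1) le_rfl
        rw [h1] at hl hr
        refine ⟨⟨hl, hr⟩, by rw [← h1, hend]; ring, fun i hi => ?_⟩
        rw [← hsn i hi]
        exact h2 i (by omega)
      · rintro ⟨⟨hl, hr⟩, h1, h2⟩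
        have he : pathHt (Fin.snoc t b) (m + 1) = a := by rw [hend, h1]; ring
        refine ⟨he, fun i hi => ?_⟩
        rcases Nat.lt_or_ge i (m + 1) with hlt | hge
        · rw [hsn i (by omega)]; exact h2 i (by omega)
        · have : i = m + 1 := by omega
          subst this
          rw [he]; exact ⟨hl, hr⟩
    let e : ((Fin m → Bool) × Bool) ≃ (Fin (m + 1) → Bool) :=
      { toFun := fun tb => Fin.snoc tb.1 tb.2
        invFun := fun s => (Fin.init s, s (Fin.last m))
        left_inv := fun tb => by simp
        right_inv := fun s => by simp }
    have hcard : (Finset.univ.filter P).card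
        = (Finset.univ.filter (fun t : Fin m → Bool => P (Fin.snoc t true))).card
          + (Finset.univ.filter (fun t : Fin m → Bool => P (Fin.snoc t false))).card := by
      classical
      rw [Finset.card_filter, Finset.card_filter, Finset.card_filter,
        ← Equiv.sum_comp e (fun s => if P s then 1 else 0), Fintype.sum_prod_type,
        ← Finset.sum_add_distrib]
      refine Finset.sum_congr rfl fun t _ => ?_
      rw [Fintype.sum_bool]
      rfl
    show ((Finset.univ.filter P).card : ℤ) = _
    rw [hcard]
    push_cast
    by_cases hcase : 0 ≤ a ∧ a ≤ H
    · have e1 : (Finset.univ.filter (fun t : Fin m → Bool => P (Fin.snoc t true)))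
          = (Finset.univ.filter (fun t : Fin m → Bool =>
              pathHt t m = a - 1 ∧ ∀ i ≤ m, 0 ≤ pathHt t i ∧ pathHt t i ≤ H)) := by
        refine Finset.filter_congr fun t _ => ?_
        rw [key]
        simp only [if_true]
        tauto
      have e2 : (Finset.univ.filter (fun t : Fin m → Bool => P (Fin.snoc t false)))
          = (Finset.univ.filter (fun t : Fin m → Bool =>
              pathHt t m = a + 1 ∧ ∀ i ≤ m, 0 ≤ pathHt t i ∧ pathHt t i ≤ H)) := by
        refine Finset.filter_congr fun t _ => ?_
        rw [key]
        simp only [Bool.false_eq_true, if_false]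
        constructor
        · rintro ⟨_, h1, h2⟩; exact ⟨by omega, h2⟩
        · rintro ⟨h1, h2⟩; exact ⟨hcase, by omega, h2⟩
      rw [e1, e2, ih (a - 1), ih (a + 1)]
      show _ = stripCount H (m + 1) a
      rw [show stripCount H (m + 1) a = if 0 ≤ a ∧ a ≤ H then
        stripCount H m (a - 1) + stripCount H m (a + 1) else 0 from rfl, if_pos hcase]
    · have e1 : ∀ b : Bool, (Finset.univ.filter
          (fun t : Fin m → Bool => P (Fin.snoc t b))) = ∅ := by
        intro b
        refine Finset.filter_false_of_mem fun t _ => ?_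
        rw [key]; tauto
      rw [e1 true, e1 false]
      show _ = stripCount H (m + 1) a
      rw [show stripCount H (m + 1) a = if 0 ≤ a ∧ a ≤ H then
        stripCount H m (a - 1) + stripCount H m (a + 1) else 0 from rfl, if_neg hcase]
      simp

lemma uc_eval (n : ℕ) (c : ℤ) : uc (2 * n) (2 * c) = intChoose (2 * n) ((n : ℤ) + c) := by
  unfold uc
  rw [if_pos ⟨(n : ℤ) + c, by push_cast; ring⟩]
  congr 1
  push_cast
  rw [show (2 * (n : ℤ) + 2 * c) = 2 * ((n : ℤ) + c) from by ring,
    Int.mul_ediv_cancel_left _ two_ne_zero]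

/-- The number of Dyck paths of length `2n` reaching height at least `h`. -/
theorem dyck_paths_reaching_height_card (n h : ℕ) (hn : 1 ≤ n) (hh : 1 ≤ h) :
    ((Finset.univ.filter (fun s : Fin (2 * n) → Bool =>
        pathHt s (2 * n) = 0 ∧ (∀ i ≤ 2 * n, 0 ≤ pathHt s i) ∧
        ∃ i ≤ 2 * n, (h : ℤ) ≤ pathHt s i)).card : ℤ)
      = ∑' k : ℕ,
          (intChoose (2 * n) ((n : ℤ) - (k + 1) * (h + 1) - 1)
            - 2 * intChoose (2 * n) ((n : ℤ) - (k + 1) * (h + 1))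
            + intChoose (2 * n) ((n : ℤ) - (k + 1) * (h + 1) + 1)) := by
  classical
  set K : ℤ := 2 * n with hKdef
  set p : ℤ := (h : ℤ) + 1 with hpdef
  have hp2 : 2 ≤ p := by rw [hpdef]; omega
  have hmK : ((2 * n : ℕ) : ℤ) ≤ K := by push_cast [hKdef]; omega
  have hle2n : ∀ (s : Fin (2 * n) → Bool) (i : ℕ), pathHt s i ≤ (2 * (n : ℤ)) := by
    intro s i
    have := pathHt_le s i
    push_cast at this ⊢
    omega
  -- The full Dyck path count
  set Tset := Finset.univ.filter (fun s : Fin (2 * n) → Bool =>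
      pathHt s (2 * n) = 0 ∧ ∀ i ≤ 2 * n, 0 ≤ pathHt s i) with hTdef
  set Bset := Finset.univ.filter (fun s : Fin (2 * n) → Bool =>
      pathHt s (2 * n) = 0 ∧ ∀ i ≤ 2 * n, 0 ≤ pathHt s i ∧ pathHt s i ≤ (h : ℤ) - 1) with hBdef
  set Aset := Finset.univ.filter (fun s : Fin (2 * n) → Bool =>
      pathHt s (2 * n) = 0 ∧ (∀ i ≤ 2 * n, 0 ≤ pathHt s i) ∧
        ∃ i ≤ 2 * n, (h : ℤ) ≤ pathHt s i) with hAdef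
  have hBsub : Bset ⊆ Tset := by
    intro s hs
    simp only [hBdef, hTdef, Finset.mem_filter] at hs ⊢
    exact ⟨hs.1, hs.2.1, fun i hi => (hs.2.2 i hi).1⟩
  have hAeq : Aset = Tset \ Bset := by
    ext s
    simp only [hAdef, hTdef, hBdef, Finset.mem_sdiff, Finset.mem_filter, Finset.mem_univ,
      true_and]
    constructor
    · rintro ⟨h0, hpos, i, hi, hge⟩
      refine ⟨⟨h0, hpos⟩, fun hB => ?_⟩
      have := (hB.2 i hi).2
      omega
    · rintro ⟨⟨h0, hpos⟩, hnB⟩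
      refine ⟨h0, hpos, ?_⟩
      by_contra hno
      push_neg at hno
      exact hnB ⟨h0, fun i hi => ⟨hpos i hi, by have := hno i hi; omega⟩⟩
  have hcards : Aset.card + Bset.card = Tset.card := by
    rw [hAeq]
    exact Finset.card_sdiff_add_card_eq_card hBsub
  -- evaluate card of Tset
  have hT : ((Tset.card : ℤ)) = intChoose (2 * n) n - intChoose (2 * n) ((n : ℤ) - 1) := by
    have e : Tset = Finset.univ.filter (fun s : Fin (2 * n) → Bool =>
        pathHt s (2 * n) = 0 ∧ ∀ i ≤ 2 * n, 0 ≤ pathHt s i ∧ pathHt s i ≤ (2 * (n : ℤ))) := by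
      rw [hTdef]
      refine Finset.filter_congr fun s _ => ?_
      constructor
      · rintro ⟨h0, hpos⟩; exact ⟨h0, fun i hi => ⟨hpos i hi, hle2n s i⟩⟩
      · rintro ⟨h0, hpos⟩; exact ⟨h0, fun i hi => (hpos i hi).1⟩
    rw [e, card_strip (2 * (n : ℤ)) (by positivity) (2 * n) 0,
      stripCount_eq_refSum (2 * (n : ℤ)) (by positivity) K (2 * n) hmK 0 (by omega) (by omega)]
    unfold refSum
    rw [Finset.sum_eq_single_of_mem 0 (by simp only [Finset.mem_Icc]; omega)]
    · rw [show (0 : ℤ) + 2 * 0 * (2 * (n : ℤ) + 2) = 2 * 0 from by ring,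
        show (-2 : ℤ) - 0 + 2 * 0 * (2 * (n : ℤ) + 2) = 2 * (-1) from by ring,
        uc_eval n 0, uc_eval n (-1), add_zero]
      norm_num
      rw [show (n : ℤ) + -1 = (n : ℤ) - 1 from by ring]
    · intro k _ hk
      rw [uc_eq_zero, uc_eq_zero, sub_zero]
      · rcases lt_or_gt_of_ne hk with hlt | hgt
        · right; push_cast; nlinarith
        · left; push_cast; nlinarith
      · rcases lt_or_gt_of_ne hk with hlt | hgt
        · right; push_cast; nlinarith
        · left; push_cast; nlinarith
  -- evaluate card of Bset
  have hB : ((Bset.card : ℤ)) = ∑ k ∈ Finset.Icc (-K) K,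
      (uc (2 * n) (2 * (k * p)) - uc (2 * n) (2 * (k * p - 1))) := by
    have h1 : ((Bset.card : ℤ)) = refSum (((h : ℤ) - 1) + 2) K (2 * n) 0 := by
      rw [hBdef, card_strip ((h : ℤ) - 1) (by omega) (2 * n) 0,
        stripCount_eq_refSum ((h : ℤ) - 1) (by omega) K (2 * n) hmK 0 (by omega) (by omega)]
    rw [h1]
    unfold refSum
    refine Finset.sum_congr rfl fun k _ => ?_
    rw [show (0 : ℤ) + 2 * k * ((h : ℤ) - 1 + 2) = 2 * (k * p) from by rw [hpdef]; ring,
      show (-2 : ℤ) - 0 + 2 * k * ((h : ℤ) - 1 + 2) = 2 * (k * p - 1) from by rw [hpdef]; ring]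
  -- the tsum is a finite sum
  rw [tsum_eq_sum (s := Finset.range (2 * n)) (fun k hk => ?_)]
  swap
  · simp only [Finset.mem_range, not_lt] at hk
    have hk1 : (2 * (n : ℤ) + 1) ≤ (k : ℤ) + 1 := by omega
    have harg : (n : ℤ) - ((k : ℤ) + 1) * p + 1 < 0 := by
      rw [hpdef]
      have h1 : (1 : ℤ) ≤ (h : ℤ) := by exact_mod_cast hh
      nlinarith
    rw [intChoose_eq_zero _ _ (Or.inl (by omega)),
      intChoose_eq_zero _ _ (Or.inl (by omega)),
      intChoose_eq_zero _ _ (Or.inl (by omega))]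
    ring
  -- put everything together
  have hAcard : ((Aset.card : ℤ)) = (Tset.card : ℤ) - (Bset.card : ℤ) := by
    have := congrArg (fun x : ℕ => (x : ℤ)) hcards
    push_cast at this
    omega
  show ((Aset.card : ℤ)) = _
  rw [hAcard, hT, hB]
  -- pull out the k = 0 term
  have h0mem : (0 : ℤ) ∈ Finset.Icc (-K) K := by simp only [Finset.mem_Icc]; omega
  rw [← Finset.add_sum_erase _ _ h0mem,
    show (2 : ℤ) * ((0 : ℤ) * p) = 2 * 0 from by ring,
    show (2 : ℤ) * ((0 : ℤ) * p - 1) = 2 * (-1) from by ring,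
    uc_eval n 0, uc_eval n (-1)]
  rw [show intChoose (2 * n) ((n : ℤ) + 0) - intChoose (2 * n) ((n : ℤ) + -1)
      = intChoose (2 * n) (n : ℤ) - intChoose (2 * n) ((n : ℤ) - 1) from by ring_nf]
  rw [sub_add_eq_sub_sub, sub_self, zero_sub, ← Finset.sum_neg_distrib]
  -- split the erased interval into negative and positive parts
  have hsplitset : (Finset.Icc (-K) K).erase 0
      = Finset.Icc (-K) (-1) ∪ Finset.Icc 1 K := by
    ext x
    simp only [Finset.mem_erase, Finset.mem_Icc, Finset.mem_union]
    omega
  have hdisj : Disjoint (Finset.Icc (-K) (-1)) (Finset.Icc (1 : ℤ) K) := by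
    rw [Finset.disjoint_left]
    intro x hx hx'
    simp only [Finset.mem_Icc] at hx hx'
    omega
  rw [hsplitset, Finset.sum_union hdisj]
  have hnegpart : ∑ k ∈ Finset.Icc (-K) (-1),
      -(uc (2 * n) (2 * (k * p)) - uc (2 * n) (2 * (k * p - 1)))
      = ∑ k ∈ Finset.Icc (1 : ℤ) K,
        -(uc (2 * n) (2 * (-k * p)) - uc (2 * n) (2 * (-k * p - 1))) := by
    refine Finset.sum_nbij' (fun k => -k) (fun k => -k) ?_ ?_ ?_ ?_ ?_
    · intro a ha; simp only [Finset.mem_Icc] at ha ⊢; omega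
    · intro a ha; simp only [Finset.mem_Icc] at ha ⊢; omega
    · intro a _; ring
    · intro a _; ring
    · intro a _
      rw [show -(-a) * p = a * p from by ring]
  rw [hnegpart, ← Finset.sum_add_distrib]
  -- now identify term by term with the target sum
  refine Finset.sum_nbij' (fun k : ℤ => (k - 1).toNat) (fun j : ℕ => (j : ℤ) + 1)
    ?_ ?_ ?_ ?_ ?_
  · intro a ha
    simp only [Finset.mem_Icc, hKdef] at ha
    simp only [Finset.mem_range]
    omega
  · intro j hj
    simp only [Finset.mem_range] at hj
    simp only [Finset.mem_Icc, hKdef]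
    omega
  · intro a ha
    simp only [Finset.mem_Icc] at ha
    show ((a - 1).toNat : ℤ) + 1 = a
    omega
  · intro j _
    show (((j : ℤ) + 1) - 1).toNat = j
    omega
  · intro k hk
    simp only [Finset.mem_Icc] at hk
    have hc : (((k - 1).toNat : ℤ)) = k - 1 := by omega
    beta_reduce
    rw [hc, show k - 1 + 1 = k from by ring]
    rw [uc_eval n (k * p), uc_eval n (k * p - 1), uc_eval n (-k * p), uc_eval n (-k * p - 1)]
    have s1 : intChoose (2 * n) ((n : ℤ) + (k * p - 1)) = intChoose (2 * n) ((n : ℤ) - k * p + 1) := by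
      rw [intChoose_symm]
      congr 1
      push_cast
      ring
    have s2 : intChoose (2 * n) ((n : ℤ) + k * p) = intChoose (2 * n) ((n : ℤ) - k * p) := by
      rw [intChoose_symm]
      congr 1
      push_cast
      ring
    have s3 : (n : ℤ) + (-k * p - 1) = (n : ℤ) - k * p - 1 := by ring
    have s4 : (n : ℤ) + -k * p = (n : ℤ) - k * p := by ring
    rw [s1, s2, s3, s4]
    ring
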